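/- Let (f_n)_{n∈ℕ} be a sequence in SV_d(X) converging to f ∈ SV_d(X) in the ‖·‖_{SV_d} norm, and let (μ_n)_{n∈ℕ} be Borel probability measures on X converging weakly to μ, such that each μ_n is a topological Gibbs measure for f_n. Then μ is a topological Gibbs measure for f. -/

import Mathlib

open MeasureTheory Filter Topology

/-- The full shift configuration space `𝒜^{ℤ^d}`. -/
abbrev Config (d : ℕ) (A : Type*) := (Fin d → ℤ) → A

/-- The shift action of `ℤ^d`: `(T^k x)_i = x_{i+k}`. -/
def shift {d : ℕ} {A : Type*} (k : Fin d → ℤ) (x : Config d A) : Config d A :=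
  fun i => x (i + k)

/-- The ℓ∞ norm of a lattice point, `‖k‖_∞ = max_i |k_i|`. -/
def normInf {d : ℕ} (k : Fin d → ℤ) : ℕ :=
  Finset.univ.sup fun i => (k i).natAbs

/-- The box `Λ_N = {k : ‖k‖_∞ ≤ N}` as a finset. -/
noncomputable def boxF (d N : ℕ) : Finset (Fin d → ℤ) :=
  Finset.Icc (fun _ => -(N : ℤ)) (fun _ => (N : ℤ))

/-- The `n`-th variation of `f` on a subshift `X`:
`δ_n(f) = sup {|f x - f y| : x, y ∈ X, x_{Λ_n} = y_{Λ_n}}`. -/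
noncomputable def deltaVar {d : ℕ} {A : Type*} (X : Set (Config d A))
    (f : Config d A → ℝ) (n : ℕ) : ℝ :=
  sSup {r : ℝ | ∃ x ∈ X, ∃ y ∈ X,
    (∀ k : Fin d → ℤ, normInf k ≤ n → x k = y k) ∧ r = |f x - f y|}

/-- `f` is bounded on `X`. -/
def BoundedOn {d : ℕ} {A : Type*} (X : Set (Config d A)) (f : Config d A → ℝ) : Prop :=
  ∃ C : ℝ, ∀ x ∈ X, |f x| ≤ C

/-- Membership in `SV_d(X)`: bounded with `Σ_{n ≥ 1} n^{d-1} δ_n(f) < ∞`. -/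
def MemSV (d : ℕ) {A : Type*} (X : Set (Config d A)) (f : Config d A → ℝ) : Prop :=
  BoundedOn X f ∧ Summable fun n : ℕ => ((n : ℝ) + 1) ^ (d - 1) * deltaVar X f (n + 1)

/-- The sup norm of `f` over `X`. -/
noncomputable def supNormOn {d : ℕ} {A : Type*} (X : Set (Config d A))
    (f : Config d A → ℝ) : ℝ :=
  sSup {r : ℝ | ∃ x ∈ X, r = |f x|}

/-- The `SV_d` norm: `‖f‖_{SV_d} = ‖f‖_∞ + Σ_{n ≥ 1} n^{d-1} δ_n(f)`. -/
noncomputable def svNorm (d : ℕ) {A : Type*} (X : Set (Config d A))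
    (f : Config d A → ℝ) : ℝ :=
  supNormOn X f + ∑' n : ℕ, ((n : ℝ) + 1) ^ (d - 1) * deltaVar X f (n + 1)

/-- The Gibbs relation `𝔗`: pairs of points of `X` that agree outside a finite set. -/
def gibbsRel {d : ℕ} {A : Type*} (X : Set (Config d A)) :
    Set (Config d A × Config d A) :=
  {p | p.1 ∈ X ∧ p.2 ∈ X ∧ ∃ Λ : Finset (Fin d → ℤ), ∀ k ∉ Λ, p.1 k = p.2 k}

/-- The cocycle `φ_f(x,y) = Σ_{k ∈ ℤ^d} (f(T^k y) - f(T^k x))` (unordered sum). -/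
noncomputable def phiF {d : ℕ} {A : Type*} (f : Config d A → ℝ)
    (x y : Config d A) : ℝ :=
  ∑' k : Fin d → ℤ, (f (shift k y) - f (shift k x))

/-- Membership in `𝓕(X)`: homeomorphisms of `X` changing only finitely many coordinates,
uniformly. -/
def memF {d : ℕ} {A : Type*} [TopologicalSpace A] (X : Set (Config d A))
    (φ : ↥X ≃ₜ ↥X) : Prop :=
  ∃ n : ℕ, 1 ≤ n ∧ ∀ x : ↥X, ∀ k : Fin d → ℤ, n < normInf k → (φ x).1 k = x.1 k

/-- `𝓕_n(X)`. -/
def Fn {d : ℕ} {A : Type*} [TopologicalSpace A] (X : Set (Config d A)) (n : ℕ) :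
    Set (↥X ≃ₜ ↥X) :=
  {φ | (∀ x : ↥X, ∀ k : Fin d → ℤ, n < normInf k → (φ x).1 k = x.1 k) ∧
    ∀ x y : ↥X,
      ((∀ k : Fin d → ℤ, normInf k ≤ n → x.1 k = y.1 k) ↔
        (∀ k : Fin d → ℤ, normInf k ≤ n → (φ x).1 k = (φ y).1 k))}

/-- The configuration `ω x_{Λ^c}`: equal to `ω` on `Λ` and to `x` off `Λ`. -/
def patch {d : ℕ} {A : Type*} (Λ : Finset (Fin d → ℤ)) (ω : {k // k ∈ Λ} → A)
    (x : Config d A) : Config d A :=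
  fun k => if h : k ∈ Λ then ω ⟨k, h⟩ else x k

/-- `f_n = Σ_{i ∈ Λ_n} f ∘ T^i`. -/
noncomputable def fnSum (d : ℕ) {A : Type*} (f : Config d A → ℝ) (n : ℕ)
    (z : Config d A) : ℝ :=
  ∑ i ∈ boxF d n, f (shift i z)

/-- The σ-algebra `𝓕_Δ` on `X`, generated by the coordinate projections `x ↦ x_i`, `i ∈ Δ`. -/
def cylSigma {d : ℕ} {A : Type*} [MeasurableSpace A] (X : Set (Config d A))
    (Δ : Set (Fin d → ℤ)) : MeasurableSpace ↥X :=
  MeasurableSpace.comap (fun (x : ↥X) (i : ↥Δ) => x.1 i.1) MeasurableSpace.pi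

/-- `μ` is a Gibbs measure for `f`: `(φ_f, 𝔗)`-conformal. -/
def IsGibbs (d : ℕ) {A : Type*} [MeasurableSpace A] (X : Set (Config d A))
    (f : Config d A → ℝ) (μ : Measure ↥X) : Prop :=
  ∀ V W : ↥X → ↥X, Measurable V → Measurable W →
    (∀ x, W (V x) = x) → (∀ x, V (W x) = x) →
    (∀ x : ↥X, ((x.1, (V x).1) ∈ gibbsRel X)) →
    (Measure.map V μ ≪ μ ∧
      ∀ᵐ x ∂μ, (Measure.map V μ).rnDeriv μ x
        = ENNReal.ofReal (Real.exp (phiF f x.1 (W x).1)))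

/-- `μ` is a topological Gibbs measure for `f`: `(φ_f|_{𝔗⁰}, 𝔗⁰)`-conformal. -/
def IsTopGibbs (d : ℕ) {A : Type*} [TopologicalSpace A] [MeasurableSpace A]
    (X : Set (Config d A)) (f : Config d A → ℝ) (μ : Measure ↥X) : Prop :=
  ∀ φ : ↥X ≃ₜ ↥X, memF X φ →
    (Measure.map (⇑φ) μ ≪ μ ∧
      ∀ᵐ x ∂μ, (Measure.map (⇑φ) μ).rnDeriv μ x
        = ENNReal.ofReal (Real.exp (phiF f x.1 (φ.symm x).1)))

/-- Finite-volume Gibbsian ratios defining the kernel `γ_Λ`. -/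
noncomputable def gammaFn (d : ℕ) {A : Type*} [Fintype A] (X : Set (Config d A))
    (f : Config d A → ℝ) (Λ : Finset (Fin d → ℤ)) (S : Set ↥X) (x : Config d A)
    (n : ℕ) : ℝ :=
  (∑ ω : {k // k ∈ Λ} → A,
      (Subtype.val '' S).indicator (fun z => Real.exp (fnSum d f n z)) (patch Λ ω x)) /
  (∑ η : {k // k ∈ Λ} → A,
      X.indicator (fun z => Real.exp (fnSum d f n z)) (patch Λ η x))

/-- The kernel `γ_Λ(S | x)`, defined as the limit of the finite-volume ratios. -/
noncomputable def gamma (d : ℕ) {A : Type*} [Fintype A] (X : Set (Config d A))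
    (f : Config d A → ℝ) (Λ : Finset (Fin d → ℤ)) (S : Set ↥X) (x : Config d A) : ℝ :=
  limUnder atTop (gammaFn d X f Λ S x)

/-- `X` is a subshift of finite type. -/
def IsSFT {d : ℕ} {A : Type*} (X : Set (Config d A)) : Prop :=
  ∃ n : ℕ, 1 ≤ n ∧ ∃ F : Set ({k : Fin d → ℤ // normInf k ≤ n} → A),
    X = {x : Config d A |
      ∀ l : Fin d → ℤ, (fun k : {k : Fin d → ℤ // normInf k ≤ n} => shift l x k.1) ∉ F}

/-- The topological Gibbs relation `𝔗⁰`. -/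
def topGibbsRel {d : ℕ} {A : Type*} [TopologicalSpace A] (X : Set (Config d A)) :
    Set (Config d A × Config d A) :=
  {p | ∃ (hx : p.1 ∈ X) (φ : ↥X ≃ₜ ↥X), memF X φ ∧ (φ ⟨p.1, hx⟩).1 = p.2}

/-- `f` is a local function on `X`. -/
def IsLocal {d : ℕ} {A : Type*} (X : Set (Config d A)) (f : Config d A → ℝ) : Prop :=
  ∃ Λ : Finset (Fin d → ℤ), ∀ x ∈ X, ∀ y ∈ X, (∀ k ∈ Λ, x k = y k) → f x = f y

section Helpers

lemma mem_boxF {d N : ℕ} {k : Fin d → ℤ} : k ∈ boxF d N ↔ normInf k ≤ N := by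
  simp only [boxF, Finset.mem_Icc, normInf, Finset.sup_le_iff, Finset.mem_univ, true_imp_iff,
    Pi.le_def]
  constructor
  · rintro ⟨h1, h2⟩ i; have := h1 i; have := h2 i; omega
  · intro h; exact ⟨fun i => by have := h i; omega, fun i => by have := h i; omega⟩

lemma normInf_triangle {d : ℕ} (i k : Fin d → ℤ) :
    normInf k ≤ normInf (i + k) + normInf i := by
  apply Finset.sup_le
  intro j _
  have h1 : (i j + k j).natAbs ≤ normInf (i + k) :=
    Finset.le_sup (f := fun j => ((i + k) j).natAbs) (Finset.mem_univ j)
  have h2 : (i j).natAbs ≤ normInf i :=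
    Finset.le_sup (f := fun j => (i j).natAbs) (Finset.mem_univ j)
  have : (k j).natAbs ≤ (i j + k j).natAbs + (i j).natAbs := by omega
  omega

lemma card_boxF (d N : ℕ) : (boxF d N).card = (2 * N + 1) ^ d := by
  rw [boxF, Pi.card_Icc]
  simp only [Int.card_Icc]
  rw [Finset.prod_const, Finset.card_univ, Fintype.card_fin]
  congr 1
  omega

lemma face_eq (d m : ℕ) (i : Fin d) (c : ℤ) (hc : -(m:ℤ) ≤ c) (hc' : c ≤ m) :
    (boxF d m).filter (fun k => k i = c) =
      Finset.Icc (Function.update (fun _ => -(m:ℤ)) i c) (Function.update (fun _ => (m:ℤ)) i c) := by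
  ext k
  simp only [Finset.mem_filter, boxF, Finset.mem_Icc, Pi.le_def]
  constructor
  · rintro ⟨⟨h1, h2⟩, h3⟩
    constructor
    · intro j
      rcases eq_or_ne j i with rfl | hj
      · simp [h3]
      · simpa [Function.update_of_ne hj] using h1 j
    · intro j
      rcases eq_or_ne j i with rfl | hj
      · simp [h3]
      · simpa [Function.update_of_ne hj] using h2 j
  · rintro ⟨h1, h2⟩
    have hki : k i = c := le_antisymm (by simpa using h2 i) (by simpa using h1 i)
    refine ⟨⟨fun j => ?_, fun j => ?_⟩, hki⟩
    · rcases eq_or_ne j i with rfl | hj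
      · rw [hki]; exact hc
      · simpa [Function.update_of_ne hj] using h1 j
    · rcases eq_or_ne j i with rfl | hj
      · rw [hki]; exact hc'
      · simpa [Function.update_of_ne hj] using h2 j

lemma card_face_le (d m : ℕ) (i : Fin d) (c : ℤ) :
    ((boxF d m).filter (fun k => k i = c)).card ≤ (2 * m + 1) ^ (d - 1) := by
  by_cases hc : -(m:ℤ) ≤ c ∧ c ≤ m
  · rw [face_eq d m i c hc.1 hc.2, Pi.card_Icc]
    rw [← Finset.prod_erase_mul _ _ (Finset.mem_univ i)]
    simp only [Function.update_self, Int.card_Icc]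
    have h1 : (c + 1 - c).toNat = 1 := by omega
    rw [h1, mul_one]
    refine le_trans (Finset.prod_le_prod' (g := fun _ => 2 * m + 1) (fun j hj => ?_)) ?_
    · have hji : j ≠ i := Finset.ne_of_mem_erase hj
      rw [Function.update_of_ne hji, Function.update_of_ne hji]
      show ((m:ℤ) + 1 - -(m:ℤ)).toNat ≤ 2 * m + 1
      omega
    · rw [Finset.prod_const, Finset.card_erase_of_mem (Finset.mem_univ i),
        Finset.card_univ, Fintype.card_fin]
  · have : (boxF d m).filter (fun k => k i = c) = ∅ := by
      rw [Finset.filter_eq_empty_iff]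
      intro k hk hki
      rw [mem_boxF] at hk
      have h2 : (k i).natAbs ≤ normInf k :=
        Finset.le_sup (f := fun j => (k j).natAbs) (Finset.mem_univ i)
      push_neg at hc
      subst hki
      omega
    simp [this]

lemma card_sphere_le (d m : ℕ) (hd : 1 ≤ d) :
    ((boxF d m).filter (fun k => normInf k = m)).card ≤ 2 * d * (2 * m + 1) ^ (d - 1) := by
  classical
  have hsub : (boxF d m).filter (fun k => normInf k = m) ⊆
      (Finset.univ : Finset (Fin d × Bool)).biUnion
        (fun p => (boxF d m).filter (fun k => k p.1 = if p.2 then (m:ℤ) else -(m:ℤ))) := by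
    intro k hk
    rw [Finset.mem_filter] at hk
    obtain ⟨hk1, hk2⟩ := hk
    have hne : (Finset.univ : Finset (Fin d)).Nonempty := by
      rw [Finset.univ_nonempty_iff]
      exact Fin.pos_iff_nonempty.mp hd
    obtain ⟨j, -, hj⟩ := Finset.exists_mem_eq_sup _ hne (fun i => (k i).natAbs)
    rw [normInf] at hk2
    rw [hk2] at hj
    rw [Finset.mem_biUnion]
    rcases Int.natAbs_eq (k j) with h | h
    · refine ⟨(j, true), Finset.mem_univ _, Finset.mem_filter.mpr ⟨hk1, ?_⟩⟩
      simp only [if_true]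
      rw [h, ← hj]
    · refine ⟨(j, false), Finset.mem_univ _, Finset.mem_filter.mpr ⟨hk1, ?_⟩⟩
      simp only [Bool.false_eq_true, if_false]
      rw [h, ← hj]
  refine le_trans (Finset.card_le_card hsub) (le_trans (Finset.card_biUnion_le) ?_)
  refine le_trans (Finset.sum_le_sum (fun p _ => card_face_le d m p.1 _)) ?_
  rw [Finset.sum_const, Finset.card_univ]
  simp [Fintype.card_prod, Fintype.card_fin, mul_assoc, mul_comm, mul_left_comm]
section Delta

variable {d : ℕ} {A : Type*} {X : Set (Config d A)} {f g : Config d A → ℝ}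

lemma abs_le_supNormOn (hb : BoundedOn X f) {x : Config d A} (hx : x ∈ X) :
    |f x| ≤ supNormOn X f := by
  obtain ⟨C, hC⟩ := hb
  exact le_csSup ⟨C, by rintro r ⟨z, hz, rfl⟩; exact hC z hz⟩ ⟨x, hx, rfl⟩

lemma supNormOn_nonneg (hne : X.Nonempty) (hb : BoundedOn X f) : 0 ≤ supNormOn X f := by
  obtain ⟨x, hx⟩ := hne
  exact le_trans (abs_nonneg _) (abs_le_supNormOn hb hx)

lemma abs_sub_le_deltaVar (hb : BoundedOn X f) {n : ℕ} {x y : Config d A}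
    (hx : x ∈ X) (hy : y ∈ X) (hxy : ∀ k : Fin d → ℤ, normInf k ≤ n → x k = y k) :
    |f x - f y| ≤ deltaVar X f n := by
  obtain ⟨C, hC⟩ := hb
  refine le_csSup ⟨2 * C, ?_⟩ ⟨x, hx, y, hy, hxy, rfl⟩
  rintro r ⟨z, hz, w, hw, -, rfl⟩
  calc |f z - f w| ≤ |f z| + |f w| := abs_sub _ _
    _ ≤ C + C := add_le_add (hC z hz) (hC w hw)
    _ = 2 * C := by ring

lemma deltaVar_nonneg (hne : X.Nonempty) (hb : BoundedOn X f) (n : ℕ) :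
    0 ≤ deltaVar X f n := by
  obtain ⟨x, hx⟩ := hne
  have := abs_sub_le_deltaVar hb hx hx (fun _ _ => rfl) (n := n)
  simpa using this

lemma BoundedOn.sub (hf : BoundedOn X f) (hg : BoundedOn X g) :
    BoundedOn X (fun z => f z - g z) := by
  obtain ⟨C, hC⟩ := hf; obtain ⟨D, hD⟩ := hg
  exact ⟨C + D, fun x hx => le_trans (abs_sub _ _) (add_le_add (hC x hx) (hD x hx))⟩

lemma deltaVar_sub_le (hne : X.Nonempty) (hf : BoundedOn X f) (hg : BoundedOn X g) (n : ℕ) :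
    deltaVar X (fun z => f z - g z) n ≤ deltaVar X f n + deltaVar X g n := by
  apply csSup_le
  · obtain ⟨x, hx⟩ := hne
    exact ⟨0, x, hx, x, hx, fun _ _ => rfl, by simp⟩
  · rintro r ⟨x, hx, y, hy, hxy, rfl⟩
    calc |(f x - g x) - (f y - g y)| ≤ |f x - f y| + |g x - g y| := by
          rw [show (f x - g x) - (f y - g y) = (f x - f y) - (g x - g y) by ring]
          exact abs_sub _ _
      _ ≤ deltaVar X f n + deltaVar X g n :=
          add_le_add (abs_sub_le_deltaVar hf hx hy hxy) (abs_sub_le_deltaVar hg hx hy hxy)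

lemma MemSV.sub (hne : X.Nonempty) (hf : MemSV d X f) (hg : MemSV d X g) :
    MemSV d X (fun z => f z - g z) := by
  refine ⟨hf.1.sub hg.1, ?_⟩
  apply Summable.of_nonneg_of_le (fun j => ?_) (fun j => ?_) (hf.2.add hg.2)
  · exact mul_nonneg (by positivity) (deltaVar_nonneg hne (hf.1.sub hg.1) _)
  · have := deltaVar_sub_le hne hf.1 hg.1 (j + 1)
    calc ((j : ℝ) + 1) ^ (d - 1) * deltaVar X (fun z => f z - g z) (j + 1)
        ≤ ((j : ℝ) + 1) ^ (d - 1) * (deltaVar X f (j + 1) + deltaVar X g (j + 1)) := by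
          apply mul_le_mul_of_nonneg_left this (by positivity)
      _ = ((j : ℝ) + 1) ^ (d - 1) * deltaVar X f (j + 1)
          + ((j : ℝ) + 1) ^ (d - 1) * deltaVar X g (j + 1) := by ring

lemma tsum_delta_nonneg (hne : X.Nonempty) (hf : MemSV d X f) :
    0 ≤ ∑' n : ℕ, ((n : ℝ) + 1) ^ (d - 1) * deltaVar X f (n + 1) :=
  tsum_nonneg fun j => mul_nonneg (by positivity) (deltaVar_nonneg hne hf.1 _)

lemma supNormOn_le_svNorm (hne : X.Nonempty) (hf : MemSV d X f) :
    supNormOn X f ≤ svNorm d X f :=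
  le_add_of_nonneg_right (tsum_delta_nonneg hne hf)

lemma tsum_delta_le_svNorm (hne : X.Nonempty) (hf : MemSV d X f) :
    (∑' n : ℕ, ((n : ℝ) + 1) ^ (d - 1) * deltaVar X f (n + 1)) ≤ svNorm d X f :=
  le_add_of_nonneg_left (supNormOn_nonneg hne hf.1)

lemma svNorm_nonneg (hne : X.Nonempty) (hf : MemSV d X f) : 0 ≤ svNorm d X f :=
  add_nonneg (supNormOn_nonneg hne hf.1) (tsum_delta_nonneg hne hf)

lemma svNorm_le_add_sub (hne : X.Nonempty) (hf : MemSV d X f) (hg : MemSV d X g) :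
    svNorm d X f ≤ svNorm d X (fun z => f z - g z) + svNorm d X g := by
  have hdiff := MemSV.sub hne hf hg
  have h1 : supNormOn X f ≤ supNormOn X (fun z => f z - g z) + supNormOn X g := by
    apply csSup_le
    · obtain ⟨x, hx⟩ := hne; exact ⟨|f x|, x, hx, rfl⟩
    · rintro r ⟨x, hx, rfl⟩
      calc |f x| = |(f x - g x) + g x| := by ring_nf
        _ ≤ |f x - g x| + |g x| := abs_add_le _ _
        _ ≤ _ := add_le_add (abs_le_supNormOn hdiff.1 hx) (abs_le_supNormOn hg.1 hx)
  have h2 : (∑' n : ℕ, ((n : ℝ) + 1) ^ (d - 1) * deltaVar X f (n + 1))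
      ≤ (∑' n : ℕ, ((n : ℝ) + 1) ^ (d - 1) * deltaVar X (fun z => f z - g z) (n + 1))
        + ∑' n : ℕ, ((n : ℝ) + 1) ^ (d - 1) * deltaVar X g (n + 1) := by
    rw [← Summable.tsum_add hdiff.2 hg.2]
    apply Summable.tsum_le_tsum _ hf.2 (hdiff.2.add hg.2)
    intro j
    have hd : deltaVar X f (j + 1) ≤ deltaVar X (fun z => f z - g z) (j + 1)
        + deltaVar X g (j + 1) := by
      apply csSup_le
      · obtain ⟨x, hx⟩ := hne; exact ⟨0, x, hx, x, hx, fun _ _ => rfl, by simp⟩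
      · rintro r ⟨x, hx, y, hy, hxy, rfl⟩
        calc |f x - f y| = |((f x - g x) - (f y - g y)) + (g x - g y)| := by ring_nf
          _ ≤ |(f x - g x) - (f y - g y)| + |g x - g y| := abs_add_le _ _
          _ ≤ _ := add_le_add (abs_sub_le_deltaVar hdiff.1 hx hy hxy)
                (abs_sub_le_deltaVar hg.1 hx hy hxy)
    calc ((j : ℝ) + 1) ^ (d - 1) * deltaVar X f (j + 1)
        ≤ ((j : ℝ) + 1) ^ (d - 1) * (deltaVar X (fun z => f z - g z) (j + 1)
            + deltaVar X g (j + 1)) := mul_le_mul_of_nonneg_left hd (by positivity)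
      _ = _ := by ring
  calc svNorm d X f = supNormOn X f + _ := rfl
    _ ≤ _ := add_le_add h1 h2
    _ = _ := by rw [svNorm, svNorm]; ring

end Delta
section Maj

variable {d : ℕ} {A : Type*} {X : Set (Config d A)} {f g : Config d A → ℝ}

/-- The summable majorant for the cocycle terms. -/
noncomputable def maj (X : Set (Config d A)) (f : Config d A → ℝ) (n : ℕ)
    (k : Fin d → ℤ) : ℝ :=
  if normInf k ≤ n + 1 then 2 * supNormOn X f else deltaVar X f (normInf k - (n + 1))

lemma maj_nonneg (hne : X.Nonempty) (hb : BoundedOn X f) (n : ℕ) :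
    0 ≤ maj X f n := by
  intro k
  unfold maj
  split
  · have := supNormOn_nonneg hne hb; positivity
  · exact deltaVar_nonneg hne hb _

lemma maj_pointwise (hinv : ∀ k : Fin d → ℤ, ∀ x ∈ X, shift k x ∈ X)
    (hb : BoundedOn X f) {n : ℕ} {x y : Config d A} (hx : x ∈ X) (hy : y ∈ X)
    (hxy : ∀ k : Fin d → ℤ, n < normInf k → x k = y k) (k : Fin d → ℤ) :
    |f (shift k y) - f (shift k x)| ≤ maj X f n k := by
  unfold maj
  split_ifs with h
  · calc |f (shift k y) - f (shift k x)| ≤ |f (shift k y)| + |f (shift k x)| := abs_sub _ _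
      _ ≤ supNormOn X f + supNormOn X f :=
          add_le_add (abs_le_supNormOn hb (hinv k y hy)) (abs_le_supNormOn hb (hinv k x hx))
      _ = 2 * supNormOn X f := by ring
  · push_neg at h
    apply abs_sub_le_deltaVar hb (hinv k y hy) (hinv k x hx)
    intro i hi
    show y (i + k) = x (i + k)
    have htri := normInf_triangle i k
    have : n < normInf (i + k) := by omega
    exact (hxy (i + k) this).symm

/-- The constant in the majorant bound. -/
noncomputable def Cmaj (d n : ℕ) : ℝ :=
  2 * (2 * n + 3) ^ d + 2 * d * (2 * n + 5) ^ (d - 1)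

lemma Cmaj_nonneg (d n : ℕ) : 0 ≤ Cmaj d n := by unfold Cmaj; positivity

lemma maj_sum_le (hd : 1 ≤ d) (hne : X.Nonempty) (hf : MemSV d X f) (n : ℕ)
    (F : Finset (Fin d → ℤ)) :
    ∑ k ∈ F, maj X f n k ≤ Cmaj d n * svNorm d X f := by
  classical
  set M : ℕ := max (n + 1) (F.sup normInf) with hM
  have hFsub : F ⊆ boxF d M := by
    intro k hk
    rw [mem_boxF]
    exact le_trans (Finset.le_sup hk) (le_max_right _ _)
  have hmono : ∑ k ∈ F, maj X f n k ≤ ∑ k ∈ boxF d M, maj X f n k :=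
    Finset.sum_le_sum_of_subset_of_nonneg hFsub
      (fun k _ _ => maj_nonneg hne hf.1 n k)
  rw [← Finset.sum_filter_add_sum_filter_not (boxF d M) (fun k => normInf k ≤ n + 1)] at hmono
  -- near part
  have hnear_set : (boxF d M).filter (fun k => normInf k ≤ n + 1) = boxF d (n + 1) := by
    ext k
    simp only [Finset.mem_filter, mem_boxF]
    constructor
    · rintro ⟨-, h⟩; exact h
    · intro h; exact ⟨le_trans h (le_max_left _ _), h⟩
  have hnear : ∑ k ∈ (boxF d M).filter (fun k => normInf k ≤ n + 1), maj X f n k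
      ≤ 2 * (2 * n + 3) ^ d * supNormOn X f := by
    rw [hnear_set]
    have : ∀ k ∈ boxF d (n + 1), maj X f n k = 2 * supNormOn X f := by
      intro k hk
      rw [mem_boxF] at hk
      simp [maj, hk]
    rw [Finset.sum_congr rfl this, Finset.sum_const, card_boxF, nsmul_eq_mul,
      show 2 * (n + 1) + 1 = 2 * n + 3 from by omega]
    push_cast
    exact le_of_eq (by ring)
  have hfar : ∑ k ∈ (boxF d M).filter (fun k => ¬ normInf k ≤ n + 1), maj X f n k
      ≤ 2 * d * (2 * n + 5) ^ (d - 1)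
        * ∑' j : ℕ, ((j : ℝ) + 1) ^ (d - 1) * deltaVar X f (j + 1) := by
    set S := (boxF d M).filter (fun k => ¬ normInf k ≤ n + 1) with hS
    have hmaps : ∀ k ∈ S, normInf k ∈ Finset.Ico (n + 2) (M + 1) := by
      intro k hk
      rw [hS, Finset.mem_filter, mem_boxF] at hk
      rw [Finset.mem_Ico]
      omega
    rw [← Finset.sum_fiberwise_of_maps_to hmaps (maj X f n)]
    have hfib : ∀ m ∈ Finset.Ico (n + 2) (M + 1),
        ∑ k ∈ S.filter (fun k => normInf k = m), maj X f n k
          ≤ ((2 * d * (2 * m + 1) ^ (d - 1) : ℕ) : ℝ) * deltaVar X f (m - (n + 1)) := by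
      intro m hm
      rw [Finset.mem_Ico] at hm
      have hterm : ∀ k ∈ S.filter (fun k => normInf k = m),
          maj X f n k = deltaVar X f (m - (n + 1)) := by
        intro k hk
        rw [Finset.mem_filter, hS, Finset.mem_filter] at hk
        rw [maj, if_neg hk.1.2, hk.2]
      rw [Finset.sum_congr rfl hterm, Finset.sum_const, nsmul_eq_mul]
      have hcard : (S.filter (fun k => normInf k = m)).card
          ≤ 2 * d * (2 * m + 1) ^ (d - 1) := by
        refine le_trans (Finset.card_le_card ?_) (card_sphere_le d m hd)
        intro k hk
        rw [Finset.mem_filter] at hk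
        rw [Finset.mem_filter]
        exact ⟨mem_boxF.mpr (le_of_eq hk.2), hk.2⟩
      have hdel := deltaVar_nonneg hne hf.1 (m - (n + 1))
      exact mul_le_mul_of_nonneg_right (by exact_mod_cast hcard) hdel
    refine le_trans (Finset.sum_le_sum hfib) ?_
    rw [Finset.sum_Ico_eq_sum_range]
    have hterm2 : ∀ j ∈ Finset.range (M + 1 - (n + 2)),
        ((2 * d * (2 * (n + 2 + j) + 1) ^ (d - 1) : ℕ) : ℝ)
            * deltaVar X f (n + 2 + j - (n + 1))
          ≤ 2 * d * (2 * n + 5) ^ (d - 1)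
            * (((j : ℝ) + 1) ^ (d - 1) * deltaVar X f (j + 1)) := by
      intro j _
      have hidx : n + 2 + j - (n + 1) = j + 1 := by omega
      rw [hidx]
      have hdel := deltaVar_nonneg hne hf.1 (j + 1)
      have hco : ((2 * d * (2 * (n + 2 + j) + 1) ^ (d - 1) : ℕ) : ℝ)
          ≤ 2 * d * (2 * n + 5) ^ (d - 1) * ((j : ℝ) + 1) ^ (d - 1) := by
        have h1 : (2 * (n + 2 + j) + 1) ≤ (2 * n + 5) * (j + 1) := by nlinarith
        calc ((2 * d * (2 * (n + 2 + j) + 1) ^ (d - 1) : ℕ) : ℝ)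
            ≤ ((2 * d * ((2 * n + 5) * (j + 1)) ^ (d - 1) : ℕ) : ℝ) := by
              exact_mod_cast Nat.mul_le_mul_left _ (Nat.pow_le_pow_left h1 _)
          _ ≤ 2 * d * (2 * n + 5) ^ (d - 1) * ((j : ℝ) + 1) ^ (d - 1) := by
              push_cast
              rw [mul_pow]
              exact le_of_eq (by ring)
      calc ((2 * d * (2 * (n + 2 + j) + 1) ^ (d - 1) : ℕ) : ℝ) * deltaVar X f (j + 1)
          ≤ (2 * d * (2 * n + 5) ^ (d - 1) * ((j : ℝ) + 1) ^ (d - 1)) * deltaVar X f (j + 1) :=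
            mul_le_mul_of_nonneg_right hco hdel
        _ = _ := by ring
    refine le_trans (Finset.sum_le_sum hterm2) ?_
    rw [← Finset.mul_sum]
    apply mul_le_mul_of_nonneg_left _ (by positivity)
    exact Summable.sum_le_tsum _ (fun j _ => mul_nonneg (by positivity) (deltaVar_nonneg hne hf.1 _)) hf.2
  have h1 := supNormOn_le_svNorm hne hf
  have h2 := tsum_delta_le_svNorm hne hf
  have hsv := svNorm_nonneg hne hf
  calc ∑ k ∈ F, maj X f n k
      ≤ ∑ k ∈ (boxF d M).filter (fun k => normInf k ≤ n + 1), maj X f n k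
        + ∑ k ∈ (boxF d M).filter (fun k => ¬ normInf k ≤ n + 1), maj X f n k := hmono
    _ ≤ 2 * (2 * n + 3) ^ d * supNormOn X f
        + 2 * d * (2 * n + 5) ^ (d - 1)
          * ∑' j : ℕ, ((j : ℝ) + 1) ^ (d - 1) * deltaVar X f (j + 1) := add_le_add hnear hfar
    _ ≤ 2 * (2 * n + 3) ^ d * svNorm d X f
        + 2 * d * (2 * n + 5) ^ (d - 1) * svNorm d X f :=
          add_le_add (mul_le_mul_of_nonneg_left h1 (by positivity))
            (mul_le_mul_of_nonneg_left h2 (by positivity))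
    _ = Cmaj d n * svNorm d X f := by unfold Cmaj; ring

lemma maj_summable (hd : 1 ≤ d) (hne : X.Nonempty) (hf : MemSV d X f) (n : ℕ) :
    Summable (maj X f n) :=
  summable_of_sum_le (maj_nonneg hne hf.1 n) (maj_sum_le hd hne hf n)

lemma maj_tsum_le (hd : 1 ≤ d) (hne : X.Nonempty) (hf : MemSV d X f) (n : ℕ) :
    ∑' k, maj X f n k ≤ Cmaj d n * svNorm d X f :=
  Summable.tsum_le_of_sum_le (maj_summable hd hne hf n) (maj_sum_le hd hne hf n)

end Maj
section Phi

variable {d : ℕ} {A : Type*} {X : Set (Config d A)} {f g : Config d A → ℝ}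

lemma phi_term_summable (hd : 1 ≤ d) (hne : X.Nonempty)
    (hinv : ∀ k : Fin d → ℤ, ∀ x ∈ X, shift k x ∈ X) (hf : MemSV d X f) {n : ℕ}
    {x y : Config d A} (hx : x ∈ X) (hy : y ∈ X)
    (hxy : ∀ k : Fin d → ℤ, n < normInf k → x k = y k) :
    Summable (fun k : Fin d → ℤ => f (shift k y) - f (shift k x)) := by
  apply Summable.of_norm_bounded (maj_summable hd hne hf n)
  intro k
  simpa using maj_pointwise hinv hf.1 hx hy hxy k

lemma abs_phiF_le (hd : 1 ≤ d) (hne : X.Nonempty)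
    (hinv : ∀ k : Fin d → ℤ, ∀ x ∈ X, shift k x ∈ X) (hf : MemSV d X f) {n : ℕ}
    {x y : Config d A} (hx : x ∈ X) (hy : y ∈ X)
    (hxy : ∀ k : Fin d → ℤ, n < normInf k → x k = y k) :
    |phiF f x y| ≤ Cmaj d n * svNorm d X f := by
  have hsnorm : Summable (fun k : Fin d → ℤ => ‖f (shift k y) - f (shift k x)‖) := by
    apply Summable.of_nonneg_of_le (fun k => norm_nonneg _) _ (maj_summable hd hne hf n)
    intro k
    simpa using maj_pointwise hinv hf.1 hx hy hxy k
  calc |phiF f x y| ≤ ∑' k, ‖f (shift k y) - f (shift k x)‖ := by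
        rw [phiF, ← Real.norm_eq_abs]
        exact norm_tsum_le_tsum_norm hsnorm
    _ ≤ ∑' k, maj X f n k := by
        apply Summable.tsum_le_tsum _ hsnorm (maj_summable hd hne hf n)
        intro k
        simpa using maj_pointwise hinv hf.1 hx hy hxy k
    _ ≤ Cmaj d n * svNorm d X f := maj_tsum_le hd hne hf n

lemma phiF_sub (hd : 1 ≤ d) (hne : X.Nonempty)
    (hinv : ∀ k : Fin d → ℤ, ∀ x ∈ X, shift k x ∈ X)
    (hf : MemSV d X f) (hg : MemSV d X g) {n : ℕ}
    {x y : Config d A} (hx : x ∈ X) (hy : y ∈ X)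
    (hxy : ∀ k : Fin d → ℤ, n < normInf k → x k = y k) :
    phiF (fun z => f z - g z) x y = phiF f x y - phiF g x y := by
  have h1 := phi_term_summable hd hne hinv hf hx hy hxy
  have h2 := phi_term_summable hd hne hinv hg hx hy hxy
  rw [phiF, phiF, phiF, ← Summable.tsum_sub h1 h2]
  congr 1
  funext k
  ring

lemma deltaVar_tendsto_zero (hne : X.Nonempty) (hf : MemSV d X f) :
    Tendsto (fun j : ℕ => deltaVar X f (j + 1)) atTop (nhds 0) := by
  have h1 := hf.2.tendsto_atTop_zero
  apply squeeze_zero (fun j => deltaVar_nonneg hne hf.1 (j + 1)) _ h1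
  intro j
  have hge : (1 : ℝ) ≤ ((j : ℝ) + 1) ^ (d - 1) := one_le_pow₀ (by linarith [Nat.cast_nonneg (α := ℝ) j])
  nlinarith [deltaVar_nonneg hne hf.1 (j + 1)]

variable [TopologicalSpace A] [DiscreteTopology A]

lemma continuous_of_memSV (hne : X.Nonempty) (hf : MemSV d X f) :
    Continuous (fun x : ↥X => f x.1) := by
  rw [continuous_iff_continuousAt]
  intro x₀
  rw [ContinuousAt, Metric.tendsto_nhds]
  intro ε hε
  obtain ⟨j, hj⟩ := (((deltaVar_tendsto_zero hne hf).eventually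
    (eventually_lt_nhds hε)).exists)
  have hopen : IsOpen {y : ↥X | ∀ i ∈ boxF d (j + 1), y.1 i = x₀.1 i} := by
    have : {y : ↥X | ∀ i ∈ boxF d (j + 1), y.1 i = x₀.1 i}
        = Subtype.val ⁻¹' (Set.pi (boxF d (j + 1) : Set (Fin d → ℤ))
            (fun i => {x₀.1 i})) := by
      ext y
      simp [Set.mem_pi]
    rw [this]
    exact (isOpen_set_pi (Finset.finite_toSet _)
      (fun i _ => isOpen_discrete _)).preimage continuous_subtype_val
  have hmem : x₀ ∈ {y : ↥X | ∀ i ∈ boxF d (j + 1), y.1 i = x₀.1 i} := fun i _ => rfl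
  filter_upwards [hopen.mem_nhds hmem] with y hy
  rw [Real.dist_eq]
  apply lt_of_le_of_lt _ hj
  apply abs_sub_le_deltaVar hf.1 y.2 x₀.2
  intro k hk
  exact hy k (mem_boxF.mpr hk)

end Phi
section Rho

variable {d : ℕ} {A : Type*} [TopologicalSpace A] [DiscreteTopology A]
  {X : Set (Config d A)} {f : Config d A → ℝ}

lemma continuous_rho (hd : 1 ≤ d) (hne : X.Nonempty)
    (hinv : ∀ k : Fin d → ℤ, ∀ x ∈ X, shift k x ∈ X) (hf : MemSV d X f) {n : ℕ}
    (ψ : ↥X → ↥X) (hψ : Continuous ψ)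
    (hagree : ∀ x : ↥X, ∀ k : Fin d → ℤ, n < normInf k → x.1 k = (ψ x).1 k) :
    Continuous (fun x : ↥X => phiF f x.1 (ψ x).1) := by
  have hfc := continuous_of_memSV hne hf
  have hshift : ∀ k : Fin d → ℤ,
      Continuous (fun x : ↥X => (⟨shift k x.1, hinv k x.1 x.2⟩ : ↥X)) := by
    intro k
    apply Continuous.subtype_mk
    exact continuous_pi fun i => (continuous_apply (i + k)).comp continuous_subtype_val
  show Continuous fun x : ↥X => ∑' k : Fin d → ℤ, (f (shift k (ψ x).1) - f (shift k x.1))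
  apply continuous_tsum
    (f := fun (k : Fin d → ℤ) (x : ↥X) => f (shift k (ψ x).1) - f (shift k x.1))
    (u := maj X f n)
  · intro k
    exact (hfc.comp ((hshift k).comp hψ)).sub (hfc.comp (hshift k))
  · exact maj_summable hd hne hf n
  · intro k x
    simpa using maj_pointwise hinv hf.1 x.2 (ψ x).2 (hagree x) k

end Rho

lemma exp_sub_exp_le {a b : ℝ} (h : b ≤ a) :
    Real.exp a - Real.exp b ≤ (a - b) * Real.exp a := by
  have h1 := Real.add_one_le_exp (b - a)
  have h2 : Real.exp (b - a) * Real.exp a = Real.exp b := by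
    rw [← Real.exp_add]; ring_nf
  have h3 := Real.exp_pos a
  nlinarith

lemma abs_exp_sub_exp (a b : ℝ) :
    |Real.exp a - Real.exp b| ≤ |a - b| * Real.exp (|a| + |b|) := by
  wlog h : b ≤ a generalizing a b
  · rw [abs_sub_comm, abs_sub_comm a b, add_comm |a|]
    exact this b a (le_of_not_ge h)
  rw [abs_of_nonneg (sub_nonneg.mpr (Real.exp_le_exp.mpr h)), abs_of_nonneg (sub_nonneg.mpr h)]
  have h1 := exp_sub_exp_le h
  have h2 : Real.exp a ≤ Real.exp (|a| + |b|) :=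
    Real.exp_le_exp.mpr ((le_abs_self a).trans (le_add_of_nonneg_right (abs_nonneg b)))
  nlinarith [sub_nonneg.mpr h, Real.exp_pos a]

lemma integral_withDensity_exp {Ω : Type*} [MeasurableSpace Ω] (ν : MeasureTheory.Measure Ω)
    {ψ : Ω → ℝ} (hψ : Measurable ψ) (g : Ω → ℝ) :
    ∫ x, g x ∂(ν.withDensity (fun x => ENNReal.ofReal (Real.exp (ψ x))))
      = ∫ x, g x * Real.exp (ψ x) ∂ν := by
  have hm : Measurable fun x => (Real.exp (ψ x)).toNNReal :=
    measurable_real_toNNReal.comp (Real.measurable_exp.comp hψ)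
  rw [show (fun x => ENNReal.ofReal (Real.exp (ψ x)))
      = fun x => (((Real.exp (ψ x)).toNNReal : NNReal) : ENNReal) from rfl]
  rw [integral_withDensity_eq_integral_smul hm g]
  congr 1
  funext x
  rw [NNReal.smul_def, Real.coe_toNNReal _ (Real.exp_nonneg _), smul_eq_mul]
  ring

end Helpers

/-- If `f_n → f` in the `SV_d`-norm, `μ_n → μ` weakly, and each `μ_n`
is a topological Gibbs measure for `f_n`, then `μ` is a topological Gibbs measure
for `f`. -/
theorem topGibbs_weak_limit {d : ℕ} (hd : 1 ≤ d) {A : Type*} [Fintype A] [Nonempty A]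
    [TopologicalSpace A] [DiscreteTopology A] [MeasurableSpace A] [BorelSpace A]
    (X : Set (Config d A)) (hne : X.Nonempty) (hcl : IsClosed X)
    (hinv : ∀ k : Fin d → ℤ, ∀ x ∈ X, shift k x ∈ X)
    (fseq : ℕ → Config d A → ℝ) (f : Config d A → ℝ)
    (hfseq : ∀ n, MemSV d X (fseq n)) (hf : MemSV d X f)
    (hconv : Tendsto (fun n => svNorm d X (fun x => fseq n x - f x)) atTop (nhds 0))
    (μseq : ℕ → Measure ↥X) (μ : Measure ↥X)
    (hμseqp : ∀ n, IsProbabilityMeasure (μseq n)) (hμp : IsProbabilityMeasure μ)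
    (hweak : ∀ g : ↥X → ℝ, Continuous g →
      Tendsto (fun n => ∫ x, g x ∂(μseq n)) atTop (nhds (∫ x, g x ∂μ)))
    (hgibbs : ∀ n, IsTopGibbs d X (fseq n) (μseq n)) :
    IsTopGibbs d X f μ := by
  classical
  haveI : CompactSpace ↥X := isCompact_iff_compactSpace.mp hcl.isCompact
  haveI : Nonempty ↥X := hne.to_subtype
  intro φ hφ
  obtain ⟨n, hn1, hagree⟩ := id hφ
  have hagree' : ∀ x : ↥X, ∀ k : Fin d → ℤ, n < normInf k → x.1 k = (φ.symm x).1 k := by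
    intro x k hk
    have h := hagree (φ.symm x) k hk
    rwa [Homeomorph.apply_symm_apply] at h
  have hφmeas : Measurable (⇑φ) := φ.continuous.measurable
  have hρcont : Continuous (fun x : ↥X => phiF f x.1 (φ.symm x).1) :=
    continuous_rho hd hne hinv hf _ φ.symm.continuous hagree'
  have hρncont : ∀ m, Continuous (fun x : ↥X => phiF (fseq m) x.1 (φ.symm x).1) :=
    fun m => continuous_rho hd hne hinv (hfseq m) _ φ.symm.continuous hagree'
  have hdiffSV : ∀ m, MemSV d X (fun x => fseq m x - f x) :=
    fun m => MemSV.sub hne (hfseq m) hf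
  set c : ℕ → ℝ := fun m => svNorm d X (fun x => fseq m x - f x) with hcdef
  have hcnn : ∀ m, 0 ≤ c m := fun m => svNorm_nonneg hne (hdiffSV m)
  set K := Cmaj d n with hKdef
  have hKnn : 0 ≤ K := Cmaj_nonneg d n
  set B := K * svNorm d X f with hBdef
  have hρ_bd : ∀ x : ↥X, |phiF f x.1 (φ.symm x).1| ≤ B :=
    fun x => abs_phiF_le hd hne hinv hf x.2 (φ.symm x).2 (hagree' x)
  have hρn_sub : ∀ m, ∀ x : ↥X,
      |phiF (fseq m) x.1 (φ.symm x).1 - phiF f x.1 (φ.symm x).1| ≤ K * c m := by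
    intro m x
    have hsplit := phiF_sub hd hne hinv (hfseq m) hf x.2 (φ.symm x).2 (hagree' x)
    rw [← hsplit]
    exact abs_phiF_le hd hne hinv (hdiffSV m) x.2 (φ.symm x).2 (hagree' x)
  have hexp_bd : ∀ m, ∀ x : ↥X,
      |Real.exp (phiF (fseq m) x.1 (φ.symm x).1) - Real.exp (phiF f x.1 (φ.symm x).1)|
        ≤ K * c m * Real.exp (B + K * c m + B) := by
    intro m x
    have h1 := abs_exp_sub_exp (phiF (fseq m) x.1 (φ.symm x).1) (phiF f x.1 (φ.symm x).1)
    have h2 := hρn_sub m x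
    have h3 := hρ_bd x
    have h4 : |phiF (fseq m) x.1 (φ.symm x).1| ≤ B + K * c m := by
      calc |phiF (fseq m) x.1 (φ.symm x).1|
          = |(phiF (fseq m) x.1 (φ.symm x).1 - phiF f x.1 (φ.symm x).1)
              + phiF f x.1 (φ.symm x).1| := by ring_nf
        _ ≤ _ + _ := abs_add_le _ _
        _ ≤ K * c m + B := add_le_add h2 h3
        _ = B + K * c m := by ring
    have hmono : Real.exp (|phiF (fseq m) x.1 (φ.symm x).1| + |phiF f x.1 (φ.symm x).1|)
        ≤ Real.exp (B + K * c m + B) := Real.exp_le_exp.mpr (by linarith)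
    calc |Real.exp (phiF (fseq m) x.1 (φ.symm x).1) - Real.exp (phiF f x.1 (φ.symm x).1)|
        ≤ _ := h1
      _ ≤ K * c m * Real.exp (B + K * c m + B) :=
          mul_le_mul h2 hmono (Real.exp_pos _).le (mul_nonneg hKnn (hcnn m))
  have stepA : ∀ g : ↥X → ℝ, Continuous g →
      ∫ x, g (φ x) ∂μ = ∫ x, g x * Real.exp (phiF f x.1 (φ.symm x).1) ∂μ := by
    intro g hg
    set gb := BoundedContinuousFunction.mkOfCompact (⟨g, hg⟩ : C(↥X, ℝ)) with hgbdef
    have hCg : ∀ x : ↥X, |g x| ≤ ‖gb‖ := by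
      intro x
      have := gb.norm_coe_le_norm x
      simpa [hgbdef, Real.norm_eq_abs] using this
    have key : ∀ m, ∫ x, g (φ x) ∂(μseq m)
        = ∫ x, g x * Real.exp (phiF (fseq m) x.1 (φ.symm x).1) ∂(μseq m) := by
      intro m
      obtain ⟨hac, hae⟩ := hgibbs m φ hφ
      haveI := hμseqp m
      haveI : IsProbabilityMeasure (Measure.map (⇑φ) (μseq m)) :=
        Measure.isProbabilityMeasure_map hφmeas.aemeasurable
      have hrn : Measure.map (⇑φ) (μseq m) = (μseq m).withDensity
          (fun x => ENNReal.ofReal (Real.exp (phiF (fseq m) x.1 (φ.symm x).1))) := by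
        rw [← Measure.withDensity_rnDeriv_eq _ _ hac]
        exact withDensity_congr_ae hae
      calc ∫ x, g (φ x) ∂(μseq m)
          = ∫ x, g x ∂(Measure.map (⇑φ) (μseq m)) :=
            (integral_map hφmeas.aemeasurable hg.aestronglyMeasurable).symm
        _ = ∫ x, g x ∂((μseq m).withDensity
              (fun x => ENNReal.ofReal (Real.exp (phiF (fseq m) x.1 (φ.symm x).1)))) := by
            rw [← hrn]
        _ = ∫ x, g x * Real.exp (phiF (fseq m) x.1 (φ.symm x).1) ∂(μseq m) :=
            integral_withDensity_exp _ (hρncont m).measurable g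
    have hlim1 : Tendsto (fun m => ∫ x, g (φ x) ∂(μseq m)) atTop
        (nhds (∫ x, g (φ x) ∂μ)) := hweak _ (hg.comp φ.continuous)
    have hJ : Tendsto (fun m => ∫ x, g x * Real.exp (phiF f x.1 (φ.symm x).1) ∂(μseq m)) atTop
        (nhds (∫ x, g x * Real.exp (phiF f x.1 (φ.symm x).1) ∂μ)) :=
      hweak _ (hg.mul (Real.continuous_exp.comp hρcont))
    have hE : Tendsto (fun m =>
        ∫ x, g x * Real.exp (phiF (fseq m) x.1 (φ.symm x).1) ∂(μseq m)
          - ∫ x, g x * Real.exp (phiF f x.1 (φ.symm x).1) ∂(μseq m)) atTop (nhds 0) := by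
      have hcont : Continuous (fun t : ℝ => ‖gb‖ * (K * t * Real.exp (B + K * t + B))) :=
        continuous_const.mul ((continuous_const.mul continuous_id).mul
          (Real.continuous_exp.comp ((continuous_const.add
            (continuous_const.mul continuous_id)).add continuous_const)))
      have hbnd : Tendsto (fun m => ‖gb‖ * (K * c m * Real.exp (B + K * c m + B)))
          atTop (nhds 0) := by
        have h0 := (hcont.tendsto 0).comp hconv
        simpa [Function.comp_def] using h0
      apply squeeze_zero_norm _ hbnd
      intro m
      haveI := hμseqp m
      have hint1 : Integrable (fun x : ↥X =>
          g x * Real.exp (phiF (fseq m) x.1 (φ.symm x).1)) (μseq m) :=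
        (BoundedContinuousFunction.mkOfCompact
          (⟨_, hg.mul (Real.continuous_exp.comp (hρncont m))⟩ : C(↥X, ℝ))).integrable _
      have hint2 : Integrable (fun x : ↥X =>
          g x * Real.exp (phiF f x.1 (φ.symm x).1)) (μseq m) :=
        (BoundedContinuousFunction.mkOfCompact
          (⟨_, hg.mul (Real.continuous_exp.comp hρcont)⟩ : C(↥X, ℝ))).integrable _
      rw [← integral_sub hint1 hint2]
      have hb : ∀ x : ↥X, ‖g x * Real.exp (phiF (fseq m) x.1 (φ.symm x).1)
          - g x * Real.exp (phiF f x.1 (φ.symm x).1)‖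
          ≤ ‖gb‖ * (K * c m * Real.exp (B + K * c m + B)) := by
        intro x
        rw [Real.norm_eq_abs, ← mul_sub, abs_mul]
        exact mul_le_mul (hCg x) (hexp_bd m x) (abs_nonneg _) (norm_nonneg gb)
      calc ‖∫ x, (g x * Real.exp (phiF (fseq m) x.1 (φ.symm x).1)
              - g x * Real.exp (phiF f x.1 (φ.symm x).1)) ∂(μseq m)‖
          ≤ ‖gb‖ * (K * c m * Real.exp (B + K * c m + B)) * ((μseq m) Set.univ).toReal :=
            norm_integral_le_of_norm_le_const (Eventually.of_forall hb)
        _ = ‖gb‖ * (K * c m * Real.exp (B + K * c m + B)) := by simp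
    have hlim2 : Tendsto (fun m => ∫ x, g (φ x) ∂(μseq m)) atTop
        (nhds (∫ x, g x * Real.exp (phiF f x.1 (φ.symm x).1) ∂μ)) := by
      have heq : (fun m => ∫ x, g (φ x) ∂(μseq m))
          = fun m => (∫ x, g x * Real.exp (phiF (fseq m) x.1 (φ.symm x).1) ∂(μseq m)
              - ∫ x, g x * Real.exp (phiF f x.1 (φ.symm x).1) ∂(μseq m))
            + ∫ x, g x * Real.exp (phiF f x.1 (φ.symm x).1) ∂(μseq m) := by
        funext m
        rw [key m]
        ring
      rw [heq]
      have h2 := hE.add hJ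
      simpa using h2
    exact tendsto_nhds_unique hlim1 hlim2
  set dens : ↥X → ENNReal := fun x => ENNReal.ofReal (Real.exp (phiF f x.1 (φ.symm x).1))
    with hdensdef
  have hdens_meas : Measurable dens :=
    ENNReal.measurable_ofReal.comp (Real.continuous_exp.comp hρcont).measurable
  haveI hfinν : IsFiniteMeasure (μ.withDensity dens) := by
    have hle : ∀ x, dens x ≤ ENNReal.ofReal (Real.exp B) := fun x =>
      ENNReal.ofReal_le_ofReal (Real.exp_le_exp.mpr ((le_abs_self _).trans (hρ_bd x)))
    have hbound : ∫⁻ x, dens x ∂μ ≤ ENNReal.ofReal (Real.exp B) * μ Set.univ := by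
      calc ∫⁻ x, dens x ∂μ ≤ ∫⁻ _, ENNReal.ofReal (Real.exp B) ∂μ := lintegral_mono hle
        _ = ENNReal.ofReal (Real.exp B) * μ Set.univ := lintegral_const _
    refine isFiniteMeasure_withDensity (ne_top_of_le_ne_top ?_ hbound)
    haveI := hμp
    simp [measure_univ, ENNReal.ofReal_ne_top]
  haveI : IsProbabilityMeasure (Measure.map (⇑φ) μ) :=
    Measure.isProbabilityMeasure_map hφmeas.aemeasurable
  have hmapeq : Measure.map (⇑φ) μ = μ.withDensity dens := by
    apply ext_of_forall_lintegral_eq_of_IsFiniteMeasure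
    intro F
    have h1 : (∫⁻ x, F x ∂(Measure.map (⇑φ) μ)) ≠ ⊤ :=
      (BoundedContinuousFunction.lintegral_lt_top_of_nnreal _ F).ne
    have h2 : (∫⁻ x, F x ∂(μ.withDensity dens)) ≠ ⊤ :=
      (BoundedContinuousFunction.lintegral_lt_top_of_nnreal _ F).ne
    rw [← ENNReal.toReal_eq_toReal_iff' h1 h2,
      BoundedContinuousFunction.toReal_lintegral_coe_eq_integral,
      BoundedContinuousFunction.toReal_lintegral_coe_eq_integral]
    have hFc : Continuous (fun x : ↥X => (F x : ℝ)) := NNReal.continuous_coe.comp F.continuous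
    calc ∫ x, (F x : ℝ) ∂(Measure.map (⇑φ) μ)
        = ∫ x, (F (φ x) : ℝ) ∂μ := integral_map hφmeas.aemeasurable hFc.aestronglyMeasurable
      _ = ∫ x, (F x : ℝ) * Real.exp (phiF f x.1 (φ.symm x).1) ∂μ := stepA _ hFc
      _ = ∫ x, (F x : ℝ) ∂(μ.withDensity dens) := by
          rw [hdensdef]
          exact (integral_withDensity_exp μ hρcont.measurable _).symm
  refine ⟨?_, ?_⟩
  · rw [hmapeq]
    exact withDensity_absolutelyContinuous μ dens
  · have hrnd := Measure.rnDeriv_withDensity μ hdens_meas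
    rw [hmapeq]
    filter_upwards [hrnd] with x hx
    rw [hx, hdensdef]
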